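/- arXiv:0910.1623 — 2 statements merged into one kernel-verified Lean document; each statement's English description precedes it below -/
import Mathlib

section
/- Let A be an n×m matrix with restricted isometry constants δ_S and restricted orthogonality constants θ_{S,S'}. Let T, Δ be disjoint index sets with 1 − δ_{|Δ|} − θ_{|Δ|,|T|}²/(1 − δ_{|T|}) > 0. Then, with M = I − A_T(A_T'A_T)^{-1}A_T', the matrix A_Δ' M A_Δ is invertible and ‖(A_Δ' M A_Δ)^{-1}‖₂ ≤ 1 / (1 − δ_{|Δ|} − θ_{|Δ|,|T|}²/(1 − δ_{|T|})). -/
open Matrix Finset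

noncomputable section

variable {n m : ℕ}

/-- Submatrix of columns of `A` indexed by `S`. -/
def cols (A : Matrix (Fin n) (Fin m) ℝ) (S : Finset (Fin m)) :
    Matrix (Fin n) {j // j ∈ S} ℝ := Matrix.of fun i j => A i j.1

/-- Subvector of `b` on indices in `S`. -/
def subv (b : Fin m → ℝ) (S : Finset (Fin m)) : {j // j ∈ S} → ℝ := fun j => b j.1

/-- `b` is supported on `S`. -/
def suppOn (b : Fin m → ℝ) (S : Finset (Fin m)) : Prop := ∀ j, j ∉ S → b j = 0

def l2v {k : Type*} [Fintype k] (v : k → ℝ) : ℝ := Real.sqrt (∑ i, v i ^ 2)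

def l1v {k : Type*} [Fintype k] (v : k → ℝ) : ℝ := ∑ i, |v i|

def linfv {k : Type*} [Fintype k] (v : k → ℝ) : ℝ := ⨆ i, |v i|

/-- ℓ¹ norm of the subvector of `b` on the complement of `T`. -/
def l1c (b : Fin m → ℝ) (T : Finset (Fin m)) : ℝ := ∑ j ∈ Tᶜ, |b j|

/-- Induced ℓ∞→ℓ∞ operator norm (max absolute row sum). -/
def matInf {k l : Type*} [Fintype k] [Fintype l] (B : Matrix k l ℝ) : ℝ :=
  ⨆ i, ∑ j, |B i j|

/-- Spectral norm (ℓ²→ℓ² operator norm). -/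
def spec {k l : Type*} [Fintype k] [Fintype l] (B : Matrix k l ℝ) : ℝ :=
  sSup ((fun x => l2v (B.mulVec x)) '' {x | l2v x ≤ 1})

/-- The modified-BPDN objective L(b) = (1/2)‖y − Ab‖₂² + γ‖b_{Tᶜ}‖₁. -/
def objL (A : Matrix (Fin n) (Fin m) ℝ) (y : Fin n → ℝ) (γ : ℝ) (T : Finset (Fin m))
    (b : Fin m → ℝ) : ℝ :=
  (1/2) * (∑ i, (y i - A.mulVec b i) ^ 2) + γ * l1c b T

/-- Orthogonal projector M = I − A_T (A_Tᵀ A_T)⁻¹ A_Tᵀ. -/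
def projM (A : Matrix (Fin n) (Fin m) ℝ) (T : Finset (Fin m)) : Matrix (Fin n) (Fin n) ℝ :=
  1 - cols A T * ((cols A T)ᵀ * cols A T)⁻¹ * (cols A T)ᵀ

/-- Least squares coefficients on `S` : (A_Sᵀ A_S)⁻¹ A_Sᵀ y. -/
def lsq (A : Matrix (Fin n) (Fin m) ℝ) (S : Finset (Fin m)) (y : Fin n → ℝ) :
    {j // j ∈ S} → ℝ :=
  ((cols A S)ᵀ * cols A S)⁻¹.mulVec ((cols A S)ᵀ.mulVec y)

/-- Least squares estimate on `S`, as a vector in ℝᵐ supported on `S`. -/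
def lsqFull (A : Matrix (Fin n) (Fin m) ℝ) (S : Finset (Fin m)) (y : Fin n → ℝ) :
    Fin m → ℝ := fun j => if h : j ∈ S then lsq A S y ⟨j, h⟩ else 0

/-- The matrix A_Δᵀ M A_Δ. -/
def schur (A : Matrix (Fin n) (Fin m) ℝ) (T Δ : Finset (Fin m)) :
    Matrix {j // j ∈ Δ} {j // j ∈ Δ} ℝ :=
  (cols A Δ)ᵀ * projM A T * cols A Δ

/-- The matrix (A_Tᵀ A_T)⁻¹ A_Tᵀ A_Δ (A_Δᵀ M A_Δ)⁻¹. -/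
def crossMat (A : Matrix (Fin n) (Fin m) ℝ) (T Δ : Finset (Fin m)) :
    Matrix {j // j ∈ T} {j // j ∈ Δ} ℝ :=
  ((cols A T)ᵀ * cols A T)⁻¹ * ((cols A T)ᵀ * cols A Δ) * (schur A T Δ)⁻¹

/-- The exact-recovery-coefficient quantity ‖(A_Δᵀ M A_Δ)⁻¹ A_Δᵀ M A_ω‖₁. -/
def erc (A : Matrix (Fin n) (Fin m) ℝ) (T Δ : Finset (Fin m)) (ω : Fin m) : ℝ :=
  l1v ((schur A T Δ)⁻¹.mulVec (((cols A Δ)ᵀ * projM A T).mulVec (fun i => A i ω)))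

/-- `δ` is a valid S-restricted isometry constant for `A`. -/
def RIP (A : Matrix (Fin n) (Fin m) ℝ) (S : ℕ) (δ : ℝ) : Prop :=
  0 ≤ δ ∧ ∀ (J : Finset (Fin m)), J.card ≤ S → ∀ x : Fin m → ℝ, suppOn x J →
    (1 - δ) * (∑ i, x i ^ 2) ≤ (∑ i, (A.mulVec x i) ^ 2) ∧
    (∑ i, (A.mulVec x i) ^ 2) ≤ (1 + δ) * (∑ i, x i ^ 2)

/-- `θ` is a valid (S,S')-restricted orthogonality constant for `A`. -/
def ROC (A : Matrix (Fin n) (Fin m) ℝ) (S S' : ℕ) (θ : ℝ) : Prop :=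
  0 ≤ θ ∧ ∀ (J J' : Finset (Fin m)), Disjoint J J' → J.card ≤ S → J'.card ≤ S' →
    ∀ x x' : Fin m → ℝ, suppOn x J → suppOn x' J' →
      |dotProduct (A.mulVec x) (A.mulVec x')| ≤ θ * l2v x * l2v x'

/-- `b` minimizes the modified-BPDN objective over vectors supported on `S`. -/
def IsRestrMin (A : Matrix (Fin n) (Fin m) ℝ) (y : Fin n → ℝ) (γ : ℝ)
    (T S : Finset (Fin m)) (b : Fin m → ℝ) : Prop :=
  suppOn b S ∧ ∀ b', suppOn b' S → objL A y γ T b ≤ objL A y γ T b'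

/-- `g` is a subgradient of `b ↦ ‖b_{Tᶜ}‖₁` at `b`. -/
def IsSubgrad (T : Finset (Fin m)) (b g : Fin m → ℝ) : Prop :=
  (∀ j, j ∈ T → g j = 0) ∧
  ∀ j, j ∉ T → |g j| ≤ 1 ∧ (b j ≠ 0 → g j = Real.sign (b j))


section Stmt6Aux

lemma aux_l2v_nonneg {k : Type*} [Fintype k] (v : k → ℝ) : 0 ≤ l2v v := Real.sqrt_nonneg _

lemma aux_l2v_sq {k : Type*} [Fintype k] (v : k → ℝ) : l2v v ^ 2 = ∑ i, v i ^ 2 :=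
  Real.sq_sqrt (Finset.sum_nonneg fun _ _ => sq_nonneg _)

lemma aux_dot_le_l2v {k : Type*} [Fintype k] (v w : k → ℝ) : v ⬝ᵥ w ≤ l2v v * l2v w := by
  have h := Finset.sum_mul_sq_le_sq_mul_sq Finset.univ v w
  have key : |∑ i, v i * w i| ≤ l2v v * l2v w := by
    rw [← Real.sqrt_sq_eq_abs]
    unfold l2v
    rw [← Real.sqrt_mul (Finset.sum_nonneg fun _ _ => sq_nonneg _)]
    exact Real.sqrt_le_sqrt h
  exact le_trans (le_abs_self _) key

lemma aux_dot_self {k : Type*} [Fintype k] (v : k → ℝ) : v ⬝ᵥ v = ∑ i, v i ^ 2 := by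
  simp [dotProduct, sq]

/-- Extension of a vector on a subtype by zero. -/
def extv (S : Finset (Fin m)) (x : {j // j ∈ S} → ℝ) : Fin m → ℝ :=
  fun j => if h : j ∈ S then x ⟨j, h⟩ else 0

lemma aux_sum_ext (S : Finset (Fin m)) (f : Fin m → ℝ) (hf : ∀ j ∉ S, f j = 0) :
    ∑ j, f j = ∑ j : {j // j ∈ S}, f j.1 := by
  rw [← Finset.sum_subtype S (fun j => Iff.rfl) f]
  exact (Finset.sum_subset (Finset.subset_univ S) (fun j _ hj => hf j hj)).symm

lemma aux_mulVec_extv (A : Matrix (Fin n) (Fin m) ℝ) (S : Finset (Fin m))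
    (x : {j // j ∈ S} → ℝ) : A.mulVec (extv S x) = (cols A S).mulVec x := by
  funext i
  simp only [Matrix.mulVec, dotProduct]
  rw [aux_sum_ext S _ (fun j hj => by simp [extv, dif_neg hj])]
  refine Finset.sum_congr rfl fun j _ => ?_
  simp [extv, cols, dif_pos j.2]

lemma aux_sumsq_extv (S : Finset (Fin m)) (x : {j // j ∈ S} → ℝ) :
    ∑ j, extv S x j ^ 2 = ∑ j, x j ^ 2 := by
  rw [aux_sum_ext S _ (fun j hj => by simp [extv, dif_neg hj])]
  refine Finset.sum_congr rfl fun j _ => ?_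
  simp [extv, dif_pos j.2]

lemma aux_l2v_extv (S : Finset (Fin m)) (x : {j // j ∈ S} → ℝ) :
    l2v (extv S x) = l2v x := by
  unfold l2v; rw [aux_sumsq_extv]

lemma aux_suppOn_extv (S : Finset (Fin m)) (x : {j // j ∈ S} → ℝ) :
    suppOn (extv S x) S := fun _ hj => dif_neg hj

lemma aux_dot_transpose {k l : Type*} [Fintype k] [Fintype l] (P : Matrix k l ℝ)
    (x : l → ℝ) (w : k → ℝ) : x ⬝ᵥ Pᵀ *ᵥ w = (P *ᵥ x) ⬝ᵥ w := by
  rw [Matrix.dotProduct_mulVec, Matrix.vecMul_transpose]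

lemma aux_quad_form {k : Type*} [Fintype k] (P : Matrix (Fin n) k ℝ) (x : k → ℝ) :
    x ⬝ᵥ (Pᵀ * P) *ᵥ x = ∑ i, (P.mulVec x i) ^ 2 := by
  rw [← Matrix.mulVec_mulVec, aux_dot_transpose, aux_dot_self]

lemma aux_rip_lower {A : Matrix (Fin n) (Fin m) ℝ} {S : Finset (Fin m)} {δ : ℝ}
    (h : RIP A S.card δ) (x : {j // j ∈ S} → ℝ) :
    (1 - δ) * ∑ j, x j ^ 2 ≤ ∑ i, ((cols A S).mulVec x i) ^ 2 := by
  have h2 := (h.2 S le_rfl (extv S x) (aux_suppOn_extv S x)).1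
  rwa [aux_mulVec_extv, aux_sumsq_extv] at h2

lemma aux_sumsq_pos {k : Type*} [Fintype k] {x : k → ℝ} (hx : x ≠ 0) :
    0 < ∑ j, x j ^ 2 := by
  obtain ⟨j, hj⟩ := Function.ne_iff.mp hx
  exact Finset.sum_pos' (fun i _ => sq_nonneg _)
    ⟨j, Finset.mem_univ _, by simpa [sq_abs] using pow_pos (abs_pos.mpr hj) 2⟩

lemma aux_schur_eq (A : Matrix (Fin n) (Fin m) ℝ) (T Δ : Finset (Fin m)) :
    schur A T Δ = (cols A Δ)ᵀ * cols A Δ -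
      ((cols A T)ᵀ * cols A Δ)ᵀ * ((((cols A T)ᵀ * cols A T)⁻¹) *
        ((cols A T)ᵀ * cols A Δ)) := by
  simp only [schur, projM, Matrix.transpose_mul, Matrix.transpose_transpose,
    Matrix.mul_sub, Matrix.sub_mul, Matrix.mul_one, Matrix.one_mul, Matrix.mul_assoc]

lemma aux_conjT {k l : Type*} (M : Matrix k l ℝ) : Mᴴ = Mᵀ := by
  ext i j; simp [Matrix.conjTranspose_apply]

lemma aux_cross {k l o : Type*} [Fintype k] [Fintype l] [Fintype o]
    (P : Matrix k l ℝ) (Q : Matrix k o ℝ) (x : o → ℝ) (w : l → ℝ) :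
    ((Pᵀ * Q) *ᵥ x) ⬝ᵥ w = (Q *ᵥ x) ⬝ᵥ (P *ᵥ w) := by
  rw [← Matrix.mulVec_mulVec, dotProduct_comm, aux_dot_transpose]
  exact dotProduct_comm _ _

lemma aux_gram_posdef {A : Matrix (Fin n) (Fin m) ℝ} {S : Finset (Fin m)} {δ : ℝ}
    (h : RIP A S.card δ) (hδ : δ < 1) : ((cols A S)ᵀ * cols A S).PosDef := by
  rw [Matrix.posDef_iff_dotProduct_mulVec]
  refine ⟨by show _ᴴ = _; rw [aux_conjT]
             simp [Matrix.transpose_mul, Matrix.transpose_transpose], fun x hx => ?_⟩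
  have hq : x ⬝ᵥ ((cols A S)ᵀ * cols A S) *ᵥ x = ∑ i, ((cols A S).mulVec x i) ^ 2 :=
    aux_quad_form _ _
  have hlow := aux_rip_lower h x
  have hsum := aux_sumsq_pos hx
  have : (0:ℝ) < (1 - δ) * ∑ j, x j ^ 2 := mul_pos (by linarith) hsum
  simpa [hq] using lt_of_lt_of_le this hlow

lemma aux_schur_quad (A : Matrix (Fin n) (Fin m) ℝ) (T Δ : Finset (Fin m))
    (hdisj : Disjoint T Δ) (δT δΔ θ : ℝ)
    (hδT : RIP A T.card δT) (hδΔ : RIP A Δ.card δΔ) (hθ : ROC A Δ.card T.card θ)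
    (hδT1 : δT < 1) (x : {j // j ∈ Δ} → ℝ) :
    (1 - δΔ - θ ^ 2 / (1 - δT)) * ∑ j, x j ^ 2 ≤ x ⬝ᵥ (schur A T Δ) *ᵥ x := by
  have hδTpos : (0:ℝ) < 1 - δT := by linarith
  have hGdet : IsUnit ((cols A T)ᵀ * cols A T).det :=
    (Matrix.isUnit_iff_isUnit_det _).mp (aux_gram_posdef hδT hδT1).isUnit
  set v : {j // j ∈ T} → ℝ := ((cols A T)ᵀ * cols A Δ) *ᵥ x with hv
  set u : {j // j ∈ T} → ℝ := (((cols A T)ᵀ * cols A T)⁻¹) *ᵥ v with hu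
  have hGu : ((cols A T)ᵀ * cols A T) *ᵥ u = v := by
    rw [hu, Matrix.mulVec_mulVec, Matrix.mul_nonsing_inv _ hGdet, Matrix.one_mulVec]
  -- expansion of the quadratic form
  have hx : x ⬝ᵥ (schur A T Δ) *ᵥ x
      = (∑ i, ((cols A Δ).mulVec x i) ^ 2) - v ⬝ᵥ u := by
    rw [aux_schur_eq, Matrix.sub_mulVec, dotProduct_sub, aux_quad_form]
    congr 1
    rw [← Matrix.mulVec_mulVec, aux_dot_transpose, ← hv, ← Matrix.mulVec_mulVec, ← hu]
  -- bound on ‖v‖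
  have hroc := hθ.2 Δ T hdisj.symm le_rfl le_rfl (extv Δ x) (extv T v)
    (aux_suppOn_extv Δ x) (aux_suppOn_extv T v)
  rw [aux_mulVec_extv, aux_mulVec_extv, aux_l2v_extv, aux_l2v_extv] at hroc
  have hvv : v ⬝ᵥ v ≤ θ * l2v x * l2v v := by
    have hrw := aux_cross (cols A T) (cols A Δ) x v
    rw [← hv] at hrw
    rw [hrw]
    exact le_trans (le_abs_self _) hroc
  have hlv : l2v v ≤ θ * l2v x := by
    rcases eq_or_lt_of_le (aux_l2v_nonneg v) with h0 | h0
    · rw [← h0]; exact mul_nonneg hθ.1 (aux_l2v_nonneg x)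
    · have h1 : (l2v v) ^ 2 ≤ θ * l2v x * l2v v := by
        rw [aux_l2v_sq, ← aux_dot_self]; exact hvv
      nlinarith
  -- bound on v ⬝ᵥ u
  have hu1 : (1 - δT) * (l2v u) ^ 2 ≤ v ⬝ᵥ u := by
    have h2 : v ⬝ᵥ u = u ⬝ᵥ ((cols A T)ᵀ * cols A T) *ᵥ u := by
      rw [← hGu, dotProduct_comm]
    rw [h2, aux_quad_form, aux_l2v_sq]
    exact aux_rip_lower hδT u
  have hcs : v ⬝ᵥ u ≤ l2v v * l2v u := aux_dot_le_l2v v u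
  have hluv : (1 - δT) * l2v u ≤ l2v v := by
    rcases eq_or_lt_of_le (aux_l2v_nonneg u) with h0 | h0
    · rw [← h0]; simpa using aux_l2v_nonneg v
    · nlinarith
  have key : (1 - δT) * (v ⬝ᵥ u) ≤ θ ^ 2 * (l2v x) ^ 2 := by
    have h3 : (1 - δT) * (v ⬝ᵥ u) ≤ (1 - δT) * (l2v v * l2v u) :=
      mul_le_mul_of_nonneg_left hcs hδTpos.le
    have h5 : l2v v * ((1 - δT) * l2v u) ≤ l2v v * l2v v :=
      mul_le_mul_of_nonneg_left hluv (aux_l2v_nonneg v)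
    have h6 : l2v v * l2v v ≤ (θ * l2v x) * (θ * l2v x) :=
      mul_self_le_mul_self (aux_l2v_nonneg v) hlv
    nlinarith
  have hq2 : v ⬝ᵥ u ≤ θ ^ 2 * (∑ j, x j ^ 2) / (1 - δT) := by
    rw [le_div_iff₀ hδTpos, ← aux_l2v_sq]
    nlinarith [key]
  have hq1 : (1 - δΔ) * ∑ j, x j ^ 2 ≤ ∑ i, ((cols A Δ).mulVec x i) ^ 2 :=
    aux_rip_lower hδΔ x
  rw [hx]
  have hexp : (1 - δΔ - θ ^ 2 / (1 - δT)) * ∑ j, x j ^ 2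
      = (1 - δΔ) * (∑ j, x j ^ 2) - θ ^ 2 * (∑ j, x j ^ 2) / (1 - δT) := by
    field_simp
  linarith

end Stmt6Aux

/-- RIP bound on the spectral norm of (A_Δᵀ M A_Δ)⁻¹. -/
theorem stmt6 (n m : ℕ) (A : Matrix (Fin n) (Fin m) ℝ) (T Δ : Finset (Fin m))
    (hdisj : Disjoint T Δ) (δT δΔ θ : ℝ)
    (hδT : RIP A T.card δT) (hδΔ : RIP A Δ.card δΔ) (hθ : ROC A Δ.card T.card θ)
    (hδT1 : δT < 1)
    (hpos : 0 < 1 - δΔ - θ ^ 2 / (1 - δT)) :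
    IsUnit (schur A T Δ) ∧
    spec ((schur A T Δ)⁻¹) ≤ 1 / (1 - δΔ - θ ^ 2 / (1 - δT)) := by
  classical
  set c := 1 - δΔ - θ ^ 2 / (1 - δT) with hc
  have hquad := aux_schur_quad A T Δ hdisj δT δΔ θ hδT hδΔ hθ hδT1
  have hδTpos : (0:ℝ) < 1 - δT := by linarith
  have hGdet : IsUnit ((cols A T)ᵀ * cols A T).det :=
    (Matrix.isUnit_iff_isUnit_det _).mp (aux_gram_posdef hδT hδT1).isUnit
  have herm : (schur A T Δ).IsHermitian := by
    show (schur A T Δ)ᴴ = schur A T Δ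
    rw [aux_conjT, aux_schur_eq]
    simp [Matrix.transpose_sub, Matrix.transpose_mul,
      Matrix.transpose_transpose, Matrix.transpose_nonsing_inv, Matrix.mul_assoc]
  have hpd : (schur A T Δ).PosDef := by
    refine Matrix.PosDef.of_dotProduct_mulVec_pos herm fun x hx => ?_
    have hsum := aux_sumsq_pos hx
    have : (0:ℝ) < c * ∑ j, x j ^ 2 := mul_pos hpos hsum
    simpa using lt_of_lt_of_le this (hquad x)
  refine ⟨hpd.isUnit, ?_⟩
  have hdet : IsUnit (schur A T Δ).det :=
    (Matrix.isUnit_iff_isUnit_det _).mp hpd.isUnit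
  refine Real.sSup_le ?_ (le_of_lt (by positivity))
  rintro r ⟨y, hy, rfl⟩
  simp only [Set.mem_setOf_eq] at hy
  set x := (schur A T Δ)⁻¹ *ᵥ y with hxdef
  have hyx : (schur A T Δ) *ᵥ x = y := by
    rw [hxdef, Matrix.mulVec_mulVec, Matrix.mul_nonsing_inv _ hdet, Matrix.one_mulVec]
  have h1 : c * (l2v x) ^ 2 ≤ x ⬝ᵥ y := by
    rw [← hyx, aux_l2v_sq]; exact hquad x
  have h2 : x ⬝ᵥ y ≤ l2v x * l2v y := aux_dot_le_l2v x y
  have h3 : l2v x * l2v y ≤ l2v x * 1 :=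
    mul_le_mul_of_nonneg_left hy (aux_l2v_nonneg x)
  show l2v x ≤ 1 / c
  rcases eq_or_lt_of_le (aux_l2v_nonneg x) with h0 | h0
  · rw [← h0]; positivity
  · rw [le_div_iff₀ hpos]
    nlinarith
end
end

section
/- Let y = Ax + w where x is supported on N ⊆ N_e and A_{N_e} has full column rank with restricted isometry constant δ_{|N_e|} < 1. Let c be the vector supported on N_e with c_{N_e} = (A_{N_e}'A_{N_e})^{-1}A_{N_e}'y. Then ‖c − x‖₂ ≤ ‖w‖₂ / √(1 − δ_{|N_e|}). -/
open Matrix Finset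

noncomputable section

variable {n m : ℕ}

lemma mulVec_suppOn (A : Matrix (Fin n) (Fin m) ℝ) (S : Finset (Fin m)) (b : Fin m → ℝ)
    (hb : suppOn b S) : A.mulVec b = (cols A S).mulVec (subv b S) := by
  funext i
  simp only [Matrix.mulVec, dotProduct, cols, subv, Matrix.of_apply]
  have h1 : ∑ x : Fin m, A i x * b x = ∑ x ∈ S, A i x * b x :=
    (Finset.sum_subset (Finset.subset_univ S) (fun j _ hj => by rw [hb j hj, mul_zero])).symm
  rw [h1, Finset.sum_subtype S (fun _ => Iff.rfl) (fun j => A i j * b j)]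

lemma swap_dot {k l : Type*} [Fintype k] [Fintype l] (M : Matrix k l ℝ) (v : l → ℝ)
    (w : k → ℝ) : (M *ᵥ v) ⬝ᵥ w = v ⬝ᵥ (Mᵀ *ᵥ w) := by
  simp only [dotProduct, Matrix.mulVec, Matrix.transpose_apply, Finset.sum_mul, Finset.mul_sum]
  rw [Finset.sum_comm]
  exact Finset.sum_congr rfl fun j _ => Finset.sum_congr rfl fun i _ => by ring

/-- ℓ² bound on the genie-aided least squares error ‖c − x‖₂. -/
theorem stmt8 (n m : ℕ) (A : Matrix (Fin n) (Fin m) ℝ) (N Ne : Finset (Fin m))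
    (hNNe : N ⊆ Ne) (hrank : IsUnit ((cols A Ne)ᵀ * cols A Ne))
    (δ : ℝ) (hδ : RIP A Ne.card δ) (hδ1 : δ < 1)
    (x : Fin m → ℝ) (hx : suppOn x N) (y : Fin n → ℝ)
    (wn : Fin n → ℝ) (hy : y = A.mulVec x + wn) :
    l2v (lsqFull A Ne y - x) ≤ l2v wn / Real.sqrt (1 - δ) := by
  set e : Fin m → ℝ := lsqFull A Ne y - x with he
  have hsupp : suppOn e Ne := by
    intro j hj
    simp [he, lsqFull, hj, hx j (fun h => hj (hNNe h))]
  have hsubvlsq : subv (lsqFull A Ne y) Ne = lsq A Ne y := by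
    funext j
    simp [subv, lsqFull, j.2]
  have hdet : IsUnit ((cols A Ne)ᵀ * cols A Ne).det :=
    (Matrix.isUnit_iff_isUnit_det _).mp hrank
  set u : Fin n → ℝ := A.mulVec e with hu
  -- key: (cols A Ne)ᵀ.mulVec u = (cols A Ne)ᵀ.mulVec wn
  have hkey : (cols A Ne)ᵀ.mulVec u = (cols A Ne)ᵀ.mulVec wn := by
    have h1 : A.mulVec (lsqFull A Ne y) = (cols A Ne).mulVec (lsq A Ne y) := by
      rw [mulVec_suppOn A Ne _ (fun j hj => by simp [lsqFull, hj]), hsubvlsq]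
    have h2 : u = (cols A Ne).mulVec (lsq A Ne y) - A.mulVec x := by
      rw [hu, he, Matrix.mulVec_sub, h1]
    rw [h2, Matrix.mulVec_sub, lsq, Matrix.mulVec_mulVec, Matrix.mulVec_mulVec,
      Matrix.mul_nonsing_inv _ hdet, Matrix.one_mulVec, hy, Matrix.mulVec_add]
    funext i
    simp
  -- u ⬝ᵥ u = u ⬝ᵥ wn
  have hself : u ⬝ᵥ u = u ⬝ᵥ wn := by
    have hue : u = (cols A Ne).mulVec (subv e Ne) := mulVec_suppOn A Ne e hsupp
    rw [hue, swap_dot, swap_dot, ← hue, hkey]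
  set S : ℝ := ∑ i, u i ^ 2 with hS
  set W : ℝ := ∑ i, wn i ^ 2 with hW
  have hSnn : 0 ≤ S := Finset.sum_nonneg fun i _ => sq_nonneg _
  have hWnn : 0 ≤ W := Finset.sum_nonneg fun i _ => sq_nonneg _
  have hSdot : S = u ⬝ᵥ wn := by
    rw [← hself]; simp [dotProduct, hS, sq]
  -- Cauchy-Schwarz : S^2 ≤ S * W
  have hcs : S ^ 2 ≤ S * W := by
    have h := Finset.sum_mul_sq_le_sq_mul_sq Finset.univ u wn
    calc S ^ 2 = (∑ i, u i * wn i) ^ 2 := by rw [hSdot]; rfl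
      _ ≤ S * W := h
  have hSW : S ≤ W := by
    rcases eq_or_lt_of_le hSnn with h0 | h0
    · rw [← h0]; exact hWnn
    · have := (mul_le_mul_iff_of_pos_right h0).mp (by nlinarith : S * S ≤ W * S)
      linarith
  -- RIP lower bound
  have hrip : (1 - δ) * (∑ i, e i ^ 2) ≤ S := hδ.2 Ne le_rfl e hsupp |>.1
  have h1δ : (0:ℝ) < 1 - δ := by linarith
  have hebd : ∑ i, e i ^ 2 ≤ W / (1 - δ) := by
    rw [le_div_iff₀ h1δ]
    calc (∑ i, e i ^ 2) * (1 - δ) = (1 - δ) * ∑ i, e i ^ 2 := mul_comm _ _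
      _ ≤ S := hrip
      _ ≤ W := hSW
  calc l2v e = Real.sqrt (∑ i, e i ^ 2) := rfl
    _ ≤ Real.sqrt (W / (1 - δ)) := Real.sqrt_le_sqrt hebd
    _ = Real.sqrt W / Real.sqrt (1 - δ) := Real.sqrt_div hWnn _
    _ = l2v wn / Real.sqrt (1 - δ) := rfl
end
end
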